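/- arXiv:1707.02293 — 2 statements merged into one kernel-verified Lean document; each statement's English description precedes it below -/
import Mathlib

section
/- The distribution minimizing ρ·KL(p, p₀) + (1-ρ)·KL(p, p₁) over densities p, where p₀ and p₁ are fixed densities and ρ ∈ (0,1), is the normalized geometric mixture p*(x) ∝ p₀(x)^ρ p₁(x)^{1-ρ}. -/
open MeasureTheory Real

/-- The distribution minimizing `ρ·KL(p, p₀) + (1-ρ)·KL(p, p₁)` over densities
`p`, where `p₀, p₁` are fixed densities and `ρ ∈ (0,1)`, is the normalized
geometric mixture `p*(x) ∝ p₀(x)^ρ p₁(x)^{1-ρ}`. -/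
theorem geometric_mixture_minimizes_KL_combination {Ω : Type*} [MeasurableSpace Ω]
    (μ : Measure Ω) (ρ : ℝ) (hρ : ρ ∈ Set.Ioo (0 : ℝ) 1)
    (p₀ p₁ : Ω → ℝ) (hp₀ : ∀ x, 0 < p₀ x) (hp₁ : ∀ x, 0 < p₁ x)
    (hp₀norm : ∫ x, p₀ x ∂μ = 1) (hp₁norm : ∫ x, p₁ x ∂μ = 1)
    (Z : ℝ) (hZpos : 0 < Z)
    (hZ : ∫ x, p₀ x ^ ρ * p₁ x ^ (1 - ρ) ∂μ = Z)
    (hZint : Integrable (fun x => p₀ x ^ ρ * p₁ x ^ (1 - ρ)) μ)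
    (pstar : Ω → ℝ) (hpstar : ∀ x, pstar x = p₀ x ^ ρ * p₁ x ^ (1 - ρ) / Z)
    (hstarint₀ : Integrable (fun x => pstar x * log (pstar x / p₀ x)) μ)
    (hstarint₁ : Integrable (fun x => pstar x * log (pstar x / p₁ x)) μ)
    (p : Ω → ℝ) (hp : ∀ x, 0 ≤ p x) (hpnorm : ∫ x, p x ∂μ = 1)
    (hint₀ : Integrable (fun x => p x * log (p x / p₀ x)) μ)
    (hint₁ : Integrable (fun x => p x * log (p x / p₁ x)) μ) :
    ρ * ∫ x, pstar x * log (pstar x / p₀ x) ∂μ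
        + (1 - ρ) * ∫ x, pstar x * log (pstar x / p₁ x) ∂μ
      ≤ ρ * ∫ x, p x * log (p x / p₀ x) ∂μ
        + (1 - ρ) * ∫ x, p x * log (p x / p₁ x) ∂μ := by
  have hqpos : ∀ x, 0 < pstar x := by
    intro x
    rw [hpstar x]
    have := hp₀ x; have := hp₁ x
    positivity
  have hps : pstar = fun x => p₀ x ^ ρ * p₁ x ^ (1 - ρ) / Z := funext hpstar
  have hqint : Integrable pstar μ := by rw [hps]; exact hZint.div_const Z
  have hqnorm : ∫ x, pstar x ∂μ = 1 := by
    rw [hps, integral_div, hZ, div_self hZpos.ne']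
  have hpint : Integrable p μ := by
    by_contra h
    rw [integral_undef h] at hpnorm
    norm_num at hpnorm
  -- key pointwise identity
  have key : ∀ (f : Ω → ℝ), (∀ x, 0 ≤ f x) → ∀ x,
      f x * log (f x / pstar x)
        = ρ * (f x * log (f x / p₀ x)) + (1 - ρ) * (f x * log (f x / p₁ x))
          + log Z * f x := by
    intro f hf x
    rcases eq_or_lt_of_le (hf x) with h | h
    · simp [← h]
    · have h0 := hp₀ x; have h1 := hp₁ x
      rw [hpstar x, log_div h.ne' (by positivity), log_div h.ne' h0.ne',
        log_div h.ne' h1.ne', log_div (by positivity) hZpos.ne',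
        log_mul (by positivity) (by positivity), log_rpow h0, log_rpow h1]
      ring
  have hgint : Integrable (fun x => p x * log (p x / pstar x)) μ := by
    have heq : (fun x => p x * log (p x / pstar x))
        = fun x => ρ * (p x * log (p x / p₀ x)) + (1 - ρ) * (p x * log (p x / p₁ x))
          + log Z * p x := funext (key p hp)
    rw [heq]
    exact ((hint₀.const_mul ρ).add (hint₁.const_mul (1 - ρ))).add (hpint.const_mul _)
  have hgval : ∫ x, p x * log (p x / pstar x) ∂μ
      = ρ * (∫ x, p x * log (p x / p₀ x) ∂μ)
        + (1 - ρ) * (∫ x, p x * log (p x / p₁ x) ∂μ) + log Z := by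
    have heq : (fun x => p x * log (p x / pstar x))
        = fun x => ρ * (p x * log (p x / p₀ x)) + (1 - ρ) * (p x * log (p x / p₁ x))
          + log Z * p x := funext (key p hp)
    have i1 : Integrable (fun x => ρ * (p x * log (p x / p₀ x))
        + (1 - ρ) * (p x * log (p x / p₁ x))) μ :=
      (hint₀.const_mul ρ).add (hint₁.const_mul (1 - ρ))
    have i2 : Integrable (fun x => log Z * p x) μ := hpint.const_mul _
    rw [heq, integral_add i1 i2,
      integral_add (hint₀.const_mul ρ) (hint₁.const_mul (1 - ρ)),
      integral_const_mul, integral_const_mul, integral_const_mul, hpnorm]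
    ring
  -- value at pstar
  have hstarval : (0 : ℝ)
      = ρ * (∫ x, pstar x * log (pstar x / p₀ x) ∂μ)
        + (1 - ρ) * (∫ x, pstar x * log (pstar x / p₁ x) ∂μ) + log Z := by
    have hzero : ∀ x, pstar x * log (pstar x / pstar x) = 0 := fun x => by
      rw [div_self (hqpos x).ne', log_one, mul_zero]
    have heq : (fun x => ρ * (pstar x * log (pstar x / p₀ x))
          + (1 - ρ) * (pstar x * log (pstar x / p₁ x)) + log Z * pstar x)
        = fun _ => (0 : ℝ) :=
      funext fun x => (key pstar (fun y => (hqpos y).le) x).symm.trans (hzero x)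
    have h0 : ∫ x, (ρ * (pstar x * log (pstar x / p₀ x))
          + (1 - ρ) * (pstar x * log (pstar x / p₁ x)) + log Z * pstar x) ∂μ = 0 := by
      rw [heq, integral_zero]
    have i1 : Integrable (fun x => ρ * (pstar x * log (pstar x / p₀ x))
        + (1 - ρ) * (pstar x * log (pstar x / p₁ x))) μ :=
      (hstarint₀.const_mul ρ).add (hstarint₁.const_mul (1 - ρ))
    have i2 : Integrable (fun x => log Z * pstar x) μ := hqint.const_mul _
    rw [integral_add i1 i2,
      integral_add (hstarint₀.const_mul ρ) (hstarint₁.const_mul (1 - ρ)),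
      integral_const_mul, integral_const_mul, integral_const_mul, hqnorm] at h0
    linarith
  -- Gibbs inequality
  have gibbs : 0 ≤ ∫ x, p x * log (p x / pstar x) ∂μ := by
    have hdiff : ∀ x, 0 ≤ p x * log (p x / pstar x) - (p x - pstar x) := by
      intro x
      have hq := hqpos x
      rcases eq_or_lt_of_le (hp x) with h | h
      · simp [← h, hq.le]
      · have hlog : log (pstar x / p x) ≤ pstar x / p x - 1 :=
          log_le_sub_one_of_pos (by positivity)
        have hlogneg : log (p x / pstar x) = - log (pstar x / p x) := by
          rw [← Real.log_inv]
          congr 1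
          field_simp
        have h2 : p x * log (pstar x / p x) ≤ p x * (pstar x / p x - 1) :=
          mul_le_mul_of_nonneg_left hlog h.le
        have h3 : p x * (pstar x / p x - 1) = pstar x - p x := by
          field_simp
        rw [hlogneg]
        nlinarith
    have hnn : 0 ≤ ∫ x, (p x * log (p x / pstar x) - (p x - pstar x)) ∂μ :=
      integral_nonneg hdiff
    have isub : Integrable (fun x => p x - pstar x) μ := hpint.sub hqint
    rw [integral_sub hgint isub, integral_sub hpint hqint,
      hpnorm, hqnorm] at hnn
    linarith
  linarith [hgval ▸ gibbs]
end

section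
/- Two-slice equivalence of power priors: if p(β₁|β₀) is the Dirac delta δ(β₁-β₀) and β₀ has prior p, then p(β₁|x₀,x₁,ρ) ∝ p(x₁|β₁)·p(x₀|β₁)^ρ·p(β₁), assuming the power prior transition p̂(β₁|x₀,ρ) ∝ p_δ(β₁|x₀)^ρ p(β₁)^{1-ρ} with p_δ(β₁|x₀) ∝ p(x₀|β₁)p(β₁). -/
/-- Two-slice equivalence of power priors (finite parameter space): with
likelihoods `L₀ β = p(x₀|β)`, `L₁ β = p(x₁|β)`, prior `π`, posterior
`p_δ(β|x₀) = L₀ β · π β / Z₀`, the power-prior update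
`L₁ β · p_δ(β)^ρ · π(β)^{1-ρ}` is proportional to the Ibrahim–Chen power-prior
posterior `L₁ β · L₀(β)^ρ · π β`. -/
theorem two_slice_power_prior_equivalence {B : Type*} [Fintype B]
    (L₀ L₁ π : B → ℝ) (hL₀ : ∀ β, 0 ≤ L₀ β) (hπ : ∀ β, 0 ≤ π β)
    (ρ : ℝ) (hρ0 : 0 ≤ ρ) (hρ1 : ρ ≤ 1)
    (Z₀ : ℝ) (hZ₀ : Z₀ = ∑ β, L₀ β * π β) (hZpos : 0 < Z₀)
    (pδ : B → ℝ) (hpδ : ∀ β, pδ β = L₀ β * π β / Z₀) :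
    ∃ c > (0 : ℝ), ∀ β, L₁ β * (pδ β ^ ρ * π β ^ (1 - ρ))
      = c * (L₁ β * L₀ β ^ ρ * π β) := by
  refine ⟨Z₀ ^ (-ρ), Real.rpow_pos_of_pos hZpos _, fun β => ?_⟩
  have hπβ := hπ β
  have hπpow : π β ^ ρ * π β ^ (1 - ρ) = π β := by
    rw [← Real.rpow_add' hπβ (by norm_num)]
    simp
  rw [hpδ β, div_eq_mul_inv, ← Real.rpow_neg_one Z₀,
    Real.mul_rpow (mul_nonneg (hL₀ β) hπβ)
      (Real.rpow_nonneg hZpos.le _),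
    Real.mul_rpow (hL₀ β) hπβ, ← Real.rpow_mul hZpos.le, neg_one_mul]
  linear_combination (L₁ β * L₀ β ^ ρ * Z₀ ^ (-ρ)) * hπpow
end
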